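/- If ∫ x² dF(x) ≤ B² and ∫ x² dG(x) ≤ B² (B ≥ 0), then W₁(F,G) ≤ 2 L(F,G) + 4 B √(L(F,G)), and W₁(F,G) ≤ 4 B √(‖F−G‖), where ‖·‖ is the Kolmogorov distance. -/

import Mathlib

open Real MeasureTheory Set ProbabilityTheory Filter Topology

/-- Lévy distance between two distribution functions. -/
noncomputable def levyDist (F G : ℝ → ℝ) : ℝ :=
  sInf {h : ℝ | 0 ≤ h ∧ ∀ x : ℝ, G (x - h) - h ≤ F x ∧ F x ≤ G (x + h) + h}

section

lemma cheb_left (μ : Measure ℝ) [IsProbabilityMeasure μ] {B : ℝ}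
    (hμ2 : ∫ y, y ^ 2 ∂μ ≤ B ^ 2) (hμint : Integrable (fun y : ℝ => y ^ 2) μ)
    {x : ℝ} (hx : x < 0) : cdf μ x ≤ B ^ 2 / x ^ 2 := by
  have hx2 : (0:ℝ) < x ^ 2 := by nlinarith
  have key : x ^ 2 * (μ {y : ℝ | x ^ 2 ≤ y ^ 2}).toReal ≤ ∫ y, y ^ 2 ∂μ :=
    mul_meas_ge_le_integral_of_nonneg (ae_of_all _ fun y => sq_nonneg y) hμint _
  have hsub : Iic x ⊆ {y : ℝ | x ^ 2 ≤ y ^ 2} := by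
    intro y hy
    have hy' : y ≤ x := hy
    have : |x| ≤ |y| := by
      rw [abs_of_neg hx, abs_of_neg (lt_of_le_of_lt hy' hx)]; linarith
    calc x ^ 2 = |x| ^ 2 := (sq_abs x).symm
      _ ≤ |y| ^ 2 := by gcongr
      _ = y ^ 2 := sq_abs y
  have hmono : (μ (Iic x)).toReal ≤ (μ {y : ℝ | x ^ 2 ≤ y ^ 2}).toReal :=
    ENNReal.toReal_mono (measure_ne_top _ _) (measure_mono hsub)
  rw [cdf_eq_real, measureReal_def, le_div_iff₀ hx2]
  nlinarith [key, hmono, hμ2, ENNReal.toReal_nonneg (a := μ (Iic x))]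

lemma cheb_right (μ : Measure ℝ) [IsProbabilityMeasure μ] {B : ℝ}
    (hμ2 : ∫ y, y ^ 2 ∂μ ≤ B ^ 2) (hμint : Integrable (fun y : ℝ => y ^ 2) μ)
    {x : ℝ} (hx : 0 < x) : 1 - cdf μ x ≤ B ^ 2 / x ^ 2 := by
  have hx2 : (0:ℝ) < x ^ 2 := by nlinarith
  have key : x ^ 2 * (μ {y : ℝ | x ^ 2 ≤ y ^ 2}).toReal ≤ ∫ y, y ^ 2 ∂μ :=
    mul_meas_ge_le_integral_of_nonneg (ae_of_all _ fun y => sq_nonneg y) hμint _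
  have hsub : Ioi x ⊆ {y : ℝ | x ^ 2 ≤ y ^ 2} := by
    intro y hy
    have hy' : x < y := hy
    have : |x| ≤ |y| := by
      rw [abs_of_pos hx, abs_of_pos (hx.trans hy')]; linarith
    calc x ^ 2 = |x| ^ 2 := (sq_abs x).symm
      _ ≤ |y| ^ 2 := by gcongr
      _ = y ^ 2 := sq_abs y
  have hcompl : (μ (Ioi x)).toReal = 1 - cdf μ x := by
    have h1 : μ (Ioi x) = 1 - μ (Iic x) := by
      rw [← compl_Iic, measure_compl measurableSet_Iic (measure_ne_top _ _), measure_univ]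
    rw [h1, cdf_eq_real, measureReal_def, ENNReal.toReal_sub_of_le (prob_le_one) (by simp)]
    simp
  have hmono : (μ (Ioi x)).toReal ≤ (μ {y : ℝ | x ^ 2 ≤ y ^ 2}).toReal :=
    ENNReal.toReal_mono (measure_ne_top _ _) (measure_mono hsub)
  rw [le_div_iff₀ hx2]
  nlinarith [key, hmono, hμ2, hcompl]

lemma tail_eq {B T : ℝ} (hT : 0 < T) :
    EqOn (fun x : ℝ => B ^ 2 * x ^ (-2 : ℝ)) (fun x : ℝ => B ^ 2 / x ^ 2) (Ioi T) := by
  intro x hx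
  have hx0 : (0:ℝ) < x := hT.trans hx
  have : x ^ (-2 : ℝ) = (x ^ 2)⁻¹ := by
    rw [show (-2:ℝ) = -((2:ℕ):ℝ) by norm_num, Real.rpow_neg hx0.le, Real.rpow_natCast]
  simp [this, div_eq_mul_inv]

lemma tail_integrable (B : ℝ) {T : ℝ} (hT : 0 < T) :
    IntegrableOn (fun x : ℝ => B ^ 2 / x ^ 2) (Ioi T) := by
  have h : IntegrableOn (fun x : ℝ => B ^ 2 * x ^ (-2 : ℝ)) (Ioi T) :=
    (integrableOn_Ioi_rpow_of_lt (by norm_num : (-2:ℝ) < -1) hT).const_mul (B ^ 2)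
  exact h.congr_fun (tail_eq hT) measurableSet_Ioi

lemma tail_integral (B : ℝ) {T : ℝ} (hT : 0 < T) :
    ∫ x in Ioi T, B ^ 2 / x ^ 2 = B ^ 2 / T := by
  rw [← setIntegral_congr_fun measurableSet_Ioi (tail_eq hT)]
  rw [MeasureTheory.integral_const_mul, integral_Ioi_rpow_of_lt (by norm_num) hT]
  rw [show (-2:ℝ) + 1 = -1 by norm_num, Real.rpow_neg_one]
  field_simp

lemma neg_sq_eq (B : ℝ) : (fun x : ℝ => B ^ 2 / (-x) ^ 2) = fun x : ℝ => B ^ 2 / x ^ 2 := by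
  funext x; rw [neg_pow]; norm_num

lemma tail_integrable_left (B : ℝ) {T : ℝ} (hT : 0 < T) :
    IntegrableOn (fun x : ℝ => B ^ 2 / x ^ 2) (Iic (-T)) := by
  have A : MeasurableEmbedding fun x : ℝ => -x :=
    (Homeomorph.neg ℝ).isClosedEmbedding.measurableEmbedding
  have hmap : volume.restrict (Iic (-T)) =
      Measure.map (fun x : ℝ => -x) (volume.restrict (Ici T)) := by
    conv_lhs => rw [← Measure.map_neg_eq_self (volume : Measure ℝ)]
    rw [A.restrict_map]
    congr 1
    ext x
    simp [neg_le]
  rw [IntegrableOn, hmap, A.integrable_map_iff]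
  have : ((fun x : ℝ => B ^ 2 / x ^ 2) ∘ fun x : ℝ => -x) = fun x : ℝ => B ^ 2 / x ^ 2 := by
    funext x; simp [neg_pow]
  rw [this, ← IntegrableOn, integrableOn_Ici_iff_integrableOn_Ioi]
  exact tail_integrable B hT

lemma tail_integral_left (B : ℝ) {T : ℝ} (hT : 0 < T) :
    ∫ x in Iic (-T), B ^ 2 / x ^ 2 = B ^ 2 / T := by
  have h1 : ∫ x in Iic (-T), B ^ 2 / x ^ 2 = ∫ x in Iic (-T), B ^ 2 / (-x) ^ 2 := by
    rw [neg_sq_eq]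
  rw [h1]
  exact (integral_comp_neg_Iic (-T) (fun x => B ^ 2 / x ^ 2)).trans
    (by rw [neg_neg, tail_integral B hT])

lemma main_bound (μ ν : Measure ℝ) [IsProbabilityMeasure μ] [IsProbabilityMeasure ν]
    {B : ℝ}
    (hμ2 : ∫ x, x ^ 2 ∂μ ≤ B ^ 2) (hν2 : ∫ x, x ^ 2 ∂ν ≤ B ^ 2)
    (hμint : Integrable (fun x : ℝ => x ^ 2) μ) (hνint : Integrable (fun x : ℝ => x ^ 2) ν)
    {h c T : ℝ} (hh : 0 ≤ h) (hc : 0 ≤ c) (hT : 0 < T)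
    (hpt : ∀ x, |cdf μ x - cdf ν x| ≤ c + (cdf ν (x + h) - cdf ν (x - h))) :
    ∫ x, |cdf μ x - cdf ν x| ≤ 2 * h + 2 * T * c + 2 * (B ^ 2 / T) := by
  set f : ℝ → ℝ := fun x => |cdf μ x - cdf ν x| with hfdef
  have hmeas : Measurable f := ((cdf μ).mono.measurable.sub (cdf ν).mono.measurable).abs
  have htail : ∀ x : ℝ, x ≠ 0 → f x ≤ B ^ 2 / x ^ 2 := by
    intro x hx0
    rcases lt_or_gt_of_ne hx0 with hneg | hpos
    · have h1 := cheb_left μ hμ2 hμint hneg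
      have h2 := cheb_left ν hν2 hνint hneg
      show |cdf μ x - cdf ν x| ≤ B ^ 2 / x ^ 2
      rw [abs_le]
      constructor <;> [skip; skip] <;>
        first
        | (linarith [cdf_nonneg μ x, cdf_nonneg ν x])
    · have h1 := cheb_right μ hμ2 hμint hpos
      have h2 := cheb_right ν hν2 hνint hpos
      show |cdf μ x - cdf ν x| ≤ B ^ 2 / x ^ 2
      rw [abs_le]
      constructor <;> linarith [cdf_le_one μ x, cdf_le_one ν x]
  have hf1 : ∀ x, f x ≤ 1 := by
    intro x
    show |cdf μ x - cdf ν x| ≤ 1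
    rw [abs_le]
    constructor <;> linarith [cdf_le_one μ x, cdf_le_one ν x, cdf_nonneg μ x, cdf_nonneg ν x]
  have hIoi : IntegrableOn f (Ioi T) := by
    refine (tail_integrable B hT).mono' hmeas.aestronglyMeasurable ?_
    filter_upwards [ae_restrict_mem measurableSet_Ioi] with x hx
    rw [Real.norm_eq_abs, abs_abs]
    exact htail x (ne_of_gt (hT.trans hx))
  have hIic : IntegrableOn f (Iic (-T)) := by
    refine (tail_integrable_left B hT).mono' hmeas.aestronglyMeasurable ?_
    filter_upwards [ae_restrict_mem measurableSet_Iic] with x hx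
    rw [Real.norm_eq_abs, abs_abs]
    refine htail x (ne_of_lt (lt_of_le_of_lt (mem_Iic.1 hx) (by linarith)))
  have hIoc : IntegrableOn f (Ioc (-T) T) := by
    refine Integrable.mono' (g := fun _ => (1:ℝ))
      (integrableOn_const measure_Ioc_lt_top.ne) hmeas.aestronglyMeasurable ?_
    refine ae_of_all _ fun x => ?_
    rw [Real.norm_eq_abs, abs_abs]
    exact hf1 x
  have hTT : (-T : ℝ) ≤ T := by linarith
  have hsplit1 : Iic (-T) ∪ Ioc (-T) T = Iic T := Iic_union_Ioc_eq_Iic hTT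
  have hIicT : IntegrableOn f (Iic T) := by rw [← hsplit1]; exact hIic.union hIoc
  have hdisj1 : Disjoint (Iic (-T)) (Ioc (-T) T) := by
    rw [disjoint_left]
    intro a ha ha'
    exact absurd (mem_Iic.1 ha) (not_le.2 ha'.1)
  have e1 : ∫ x, f x = (∫ x in Iic T, f x) + ∫ x in Ioi T, f x := by
    rw [← setIntegral_union (Iic_disjoint_Ioi le_rfl) measurableSet_Ioi hIicT hIoi,
      Iic_union_Ioi, setIntegral_univ]
  have e2 : ∫ x in Iic T, f x = (∫ x in Iic (-T), f x) + ∫ x in Ioc (-T) T, f x := by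
    rw [← setIntegral_union hdisj1 measurableSet_Ioc hIic hIoc, hsplit1]
  have b1 : ∫ x in Iic (-T), f x ≤ B ^ 2 / T := by
    rw [← tail_integral_left B hT]
    exact setIntegral_mono_on hIic (tail_integrable_left B hT) measurableSet_Iic
      fun x hx => htail x (ne_of_lt (lt_of_le_of_lt (mem_Iic.1 hx) (by linarith)))
  have b3 : ∫ x in Ioi T, f x ≤ B ^ 2 / T := by
    rw [← tail_integral B hT]
    exact setIntegral_mono_on hIoi (tail_integrable B hT) measurableSet_Ioi
      fun x hx => htail x (ne_of_gt (hT.trans hx))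
  set g : ℝ → ℝ := fun x => c + (cdf ν (x + h) - cdf ν (x - h)) with hgdef
  have hgmeas : Measurable g :=
    measurable_const.add (((cdf ν).mono.measurable.comp (measurable_add_const h)).sub
      ((cdf ν).mono.measurable.comp (measurable_sub_const h)))
  have hgint : IntegrableOn g (Ioc (-T) T) := by
    refine Integrable.mono' (g := fun _ => c + 1)
      (integrableOn_const measure_Ioc_lt_top.ne) hgmeas.aestronglyMeasurable ?_
    refine ae_of_all _ fun x => ?_
    rw [Real.norm_eq_abs, abs_le]
    constructor <;>
      simp only [hgdef] <;>
      linarith [cdf_nonneg ν (x + h), cdf_le_one ν (x + h), cdf_nonneg ν (x - h),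
        cdf_le_one ν (x - h)]
  have iiG : ∀ a b : ℝ, IntervalIntegrable (fun x => cdf ν x) volume a b :=
    fun a b => Monotone.intervalIntegrable (cdf ν).mono
  have iia : IntervalIntegrable (fun x => cdf ν (x + h)) volume (-T) T :=
    Monotone.intervalIntegrable (fun x y hxy => (cdf ν).mono (by linarith))
  have iib : IntervalIntegrable (fun x => cdf ν (x - h)) volume (-T) T :=
    Monotone.intervalIntegrable (fun x y hxy => (cdf ν).mono (by linarith))
  have b2 : ∫ x in Ioc (-T) T, f x ≤ 2 * T * c + 2 * h := by
    have step1 : ∫ x in Ioc (-T) T, f x ≤ ∫ x in Ioc (-T) T, g x :=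
      setIntegral_mono_on hIoc hgint measurableSet_Ioc fun x _ => hpt x
    have step2 : ∫ x in Ioc (-T) T, g x
        = 2 * T * c + ((∫ x in (-T + h)..(T + h), cdf ν x)
            - ∫ x in (-T - h)..(T - h), cdf ν x) := by
      rw [← intervalIntegral.integral_of_le hTT]
      have : (∫ x in (-T)..T, g x)
          = (∫ x in (-T)..T, (c : ℝ)) + ∫ x in (-T)..T, (cdf ν (x + h) - cdf ν (x - h)) :=
        intervalIntegral.integral_add intervalIntegrable_const (iia.sub iib)
      rw [this, intervalIntegral.integral_sub iia iib, intervalIntegral.integral_const,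
        intervalIntegral.integral_comp_add_right (fun x => cdf ν x),
        intervalIntegral.integral_comp_sub_right (fun x => cdf ν x), smul_eq_mul]
      ring
    have adj1 : (∫ x in (-T + h)..(T - h), cdf ν x) + ∫ x in (T - h)..(T + h), cdf ν x
        = ∫ x in (-T + h)..(T + h), cdf ν x :=
      intervalIntegral.integral_add_adjacent_intervals (iiG _ _) (iiG _ _)
    have adj2 : (∫ x in (-T - h)..(-T + h), cdf ν x) + ∫ x in (-T + h)..(T - h), cdf ν x
        = ∫ x in (-T - h)..(T - h), cdf ν x :=
      intervalIntegral.integral_add_adjacent_intervals (iiG _ _) (iiG _ _)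
    have bd1 : ∫ x in (T - h)..(T + h), cdf ν x ≤ 2 * h := by
      have hone : ∫ x in (T - h)..(T + h), (1:ℝ) = 2 * h := by
        rw [intervalIntegral.integral_const, smul_eq_mul]; ring
      rw [← hone]
      exact intervalIntegral.integral_mono_on (by linarith) (iiG _ _) intervalIntegrable_const
        (fun x _ => cdf_le_one ν x)
    have bd2 : 0 ≤ ∫ x in (-T - h)..(-T + h), cdf ν x :=
      intervalIntegral.integral_nonneg (by linarith) (fun x _ => cdf_nonneg ν x)
    linarith
  linarith [e1, e2, b1, b2, b3]
end

private lemma le_of_forall_pos_le_add' {a b : ℝ} (hle : ∀ ε > 0, a ≤ b + ε) : a ≤ b := by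
  by_contra hab
  push_neg at hab
  have := hle ((a - b) / 2) (by linarith)
  linarith

theorem stmt_16 (μ ν : Measure ℝ) [IsProbabilityMeasure μ] [IsProbabilityMeasure ν]
    (B : ℝ) (hB : 0 ≤ B)
    (hμ2 : ∫ x, x ^ 2 ∂μ ≤ B ^ 2) (hν2 : ∫ x, x ^ 2 ∂ν ≤ B ^ 2)
    (hμint : Integrable (fun x : ℝ => x ^ 2) μ) (hνint : Integrable (fun x : ℝ => x ^ 2) ν) :
    (∫ x, |cdf μ x - cdf ν x|)
      ≤ 2 * levyDist (fun x => cdf μ x) (fun x => cdf ν x)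
        + 4 * B * Real.sqrt (levyDist (fun x => cdf μ x) (fun x => cdf ν x)) ∧
    (∫ x, |cdf μ x - cdf ν x|)
      ≤ 4 * B * Real.sqrt (⨆ x : ℝ, |cdf μ x - cdf ν x|) := by
  have hf1 : ∀ x, |cdf μ x - cdf ν x| ≤ 1 := by
    intro x
    rw [abs_le]
    constructor <;> linarith [cdf_le_one μ x, cdf_le_one ν x, cdf_nonneg μ x, cdf_nonneg ν x]
  set S : Set ℝ := {h : ℝ | 0 ≤ h ∧
      ∀ x : ℝ, cdf ν (x - h) - h ≤ cdf μ x ∧ cdf μ x ≤ cdf ν (x + h) + h} with hSdef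
  have hLS : levyDist (fun x => cdf μ x) (fun x => cdf ν x) = sInf S := rfl
  set L : ℝ := sInf S with hLdef
  have hSne : (1:ℝ) ∈ S := by
    refine ⟨zero_le_one, fun x => ⟨?_, ?_⟩⟩
    · linarith [cdf_le_one ν (x - 1), cdf_nonneg μ x]
    · linarith [cdf_nonneg ν (x + 1), cdf_le_one μ x]
  have hL0 : 0 ≤ L := le_csInf ⟨1, hSne⟩ fun a ha => ha.1
  have hup : ∀ a ∈ S, ∀ b, a ≤ b → b ∈ S := by
    intro a ha b hab
    refine ⟨ha.1.trans hab, fun x => ?_⟩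
    obtain ⟨h1, h2⟩ := ha.2 x
    constructor
    · have := (cdf ν).mono (show x - b ≤ x - a by linarith)
      linarith
    · have := (cdf ν).mono (show x + a ≤ x + b by linarith)
      linarith
  have hmem : ∀ ε > 0, L + ε ∈ S := by
    intro ε hε
    obtain ⟨a, haS, halt⟩ := exists_lt_of_csInf_lt ⟨1, hSne⟩
      (show sInf S < L + ε by rw [← hLdef]; linarith)
    exact hup a haS _ halt.le
  have claim : ∀ h' ∈ S, 0 < h' →
      ∫ x, |cdf μ x - cdf ν x| ≤ 2 * h' + 4 * B * Real.sqrt h' := by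
    intro h' hS hpos
    have hpt : ∀ x, |cdf μ x - cdf ν x| ≤ h' + (cdf ν (x + h') - cdf ν (x - h')) := by
      intro x
      obtain ⟨hl, hr⟩ := hS.2 x
      have m1 : cdf ν (x - h') ≤ cdf ν x := (cdf ν).mono (by linarith [hS.1])
      have m2 : cdf ν x ≤ cdf ν (x + h') := (cdf ν).mono (by linarith [hS.1])
      rw [abs_le]
      constructor <;> linarith
    rcases eq_or_lt_of_le hB with hB0 | hBpos
    · have key : ∀ ε > 0, ∫ x, |cdf μ x - cdf ν x| ≤ 2 * h' + ε := by
        intro ε hε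
        have hT : 0 < ε / (2 * h') := by positivity
        have hmb := main_bound μ ν hμ2 hν2 hμint hνint hS.1 hpos.le hT hpt
        rw [← hB0] at hmb
        have e : 2 * (ε / (2 * h')) * h' = ε := by field_simp
        norm_num at hmb
        linarith
      have h0 : ∫ x, |cdf μ x - cdf ν x| ≤ 2 * h' := le_of_forall_pos_le_add' key
      have : 0 ≤ 4 * B * Real.sqrt h' := by positivity
      linarith
    · set s : ℝ := Real.sqrt h' with hs
      have hs0 : 0 < s := Real.sqrt_pos.2 hpos
      have hss : s * s = h' := Real.mul_self_sqrt hpos.le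
      have hT : 0 < B / s := div_pos hBpos hs0
      have hmb := main_bound μ ν hμ2 hν2 hμint hνint hS.1 hpos.le hT hpt
      have e : 2 * (B / s) * h' + 2 * (B ^ 2 / (B / s)) = 4 * B * s := by
        rw [← hss]; field_simp; ring
      linarith
  constructor
  · -- Lévy bound
    rw [hLS]
    have seq : ∀ n : ℕ, ∫ x, |cdf μ x - cdf ν x|
        ≤ 2 * (L + 1 / ((n:ℝ) + 1)) + 4 * B * Real.sqrt (L + 1 / ((n:ℝ) + 1)) := by
      intro n
      have hεp : (0:ℝ) < 1 / ((n:ℝ) + 1) := by positivity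
      exact claim _ (hmem _ hεp) (by linarith)
    have h0 : Tendsto (fun n : ℕ => L + 1 / ((n:ℝ) + 1)) atTop (𝓝 L) := by
      have := tendsto_one_div_add_atTop_nhds_zero_nat (𝕜 := ℝ)
      simpa using (tendsto_const_nhds (x := L) (f := atTop)).add this
    have hcont : Continuous fun t : ℝ => 2 * t + 4 * B * Real.sqrt t :=
      (continuous_const.mul continuous_id).add (continuous_const.mul Real.continuous_sqrt)
    have htend := ((hcont.continuousAt (x := L)).tendsto).comp h0
    exact ge_of_tendsto htend (Eventually.of_forall seq)
  · -- Kolmogorov bound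
    set K : ℝ := ⨆ x : ℝ, |cdf μ x - cdf ν x| with hKdef'
    have hbdd : BddAbove (range fun x : ℝ => |cdf μ x - cdf ν x|) := by
      refine ⟨1, ?_⟩
      rintro y ⟨x, rfl⟩
      exact hf1 x
    have hK0 : 0 ≤ K := le_trans (abs_nonneg _) (le_ciSup hbdd 0)
    have hpt2 : ∀ x, |cdf μ x - cdf ν x| ≤ K + (cdf ν (x + 0) - cdf ν (x - 0)) := by
      intro x
      rw [add_zero, sub_zero, sub_self, add_zero]
      exact le_ciSup hbdd x
    rcases eq_or_lt_of_le hK0 with hK | hKpos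
    · have hzero : (fun x : ℝ => |cdf μ x - cdf ν x|) = fun _ => (0:ℝ) := by
        funext x
        have h1 : |cdf μ x - cdf ν x| ≤ K := le_ciSup hbdd x
        exact le_antisymm (by linarith) (abs_nonneg _)
      rw [hzero, integral_zero]
      positivity
    · rcases eq_or_lt_of_le hB with hB0 | hBpos
      · have key : ∀ ε > 0, ∫ x, |cdf μ x - cdf ν x| ≤ 0 + ε := by
          intro ε hε
          have hT : 0 < ε / (2 * K) := by positivity
          have hmb := main_bound μ ν hμ2 hν2 hμint hνint le_rfl hK0 hT hpt2
          rw [← hB0] at hmb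
          have e : 2 * (ε / (2 * K)) * K = ε := by field_simp
          norm_num at hmb
          linarith
        have h0 := le_of_forall_pos_le_add' key
        have : 0 ≤ 4 * B * Real.sqrt K := by positivity
        linarith
      · set s : ℝ := Real.sqrt K with hs
        have hs0 : 0 < s := Real.sqrt_pos.2 hKpos
        have hss : s * s = K := Real.mul_self_sqrt hK0
        have hT : 0 < B / s := div_pos hBpos hs0
        have hmb := main_bound μ ν hμ2 hν2 hμint hνint le_rfl hK0 hT hpt2
        have e : 2 * (B / s) * K + 2 * (B ^ 2 / (B / s)) = 4 * B * s := by
          rw [← hss]; field_simp; ring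
        linarith
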